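/- Let ρ₁, ρ₂, ρ₃ be real numbers with 0 ≤ ρ₁ ≤ ρ₂ ≤ ρ₃. Then 6(ρ₁³+ρ₂³+ρ₃³) − 5(ρ₁+ρ₂+ρ₃)(ρ₁²+ρ₂²+ρ₃²) + (ρ₁+ρ₂+ρ₃)³ ≥ 0. -/
import Mathlib


/-- Algebraic core of Lemma 2.4: for ordered nonnegative Ricci eigenvalues
`ρ₁ ≤ ρ₂ ≤ ρ₃`, the expression `6∑ρᵢ³ − 5R·|Ric|² + R³` is nonnegative. -/
theorem stmt_0 (ρ₁ ρ₂ ρ₃ : ℝ) (h₀ : 0 ≤ ρ₁) (h₁ : ρ₁ ≤ ρ₂) (h₂ : ρ₂ ≤ ρ₃) :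
    6 * (ρ₁ ^ 3 + ρ₂ ^ 3 + ρ₃ ^ 3)
      - 5 * (ρ₁ + ρ₂ + ρ₃) * (ρ₁ ^ 2 + ρ₂ ^ 2 + ρ₃ ^ 2)
      + (ρ₁ + ρ₂ + ρ₃) ^ 3 ≥ 0 := by
  nlinarith [mul_nonneg (sub_nonneg.2 h₁) (sub_nonneg.2 h₂), mul_nonneg h₀ (mul_nonneg (sub_nonneg.2 h₁) (sub_nonneg.2 h₂)), mul_nonneg (h₀.trans h₁) (sq_nonneg (ρ₃ - ρ₂)), mul_nonneg h₀ (sq_nonneg (ρ₃ - ρ₁)), mul_nonneg h₀ (sq_nonneg (ρ₂ - ρ₁)), mul_nonneg ((h₀.trans h₁).trans h₂) (sq_nonneg (ρ₂ - ρ₁))]
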